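/- Let p, m, s be positive integers. Then Σ_{n=1}^∞ 1/(n^p (n+m)² (n+s)) = Σ_{v=0}^{p-1} ((-1)^p/(s^{p-v} m^{v+1})) { ζ(2) - H_m^{(2)} - (v+1) H_m/m + Σ_{n=0}^{v-1} (-m)^n (v-n) ζ(n+2) } + ((-1)^p/s^p) B₃(m,s), where B₃(m,s) = ζ(3) - H_m^{(3)} if m = s, and B₃(m,s) = ζ(2)/(s-m) + (H_m - H_s)/(s-m)² - H_m^{(2)}/(s-m) if m ≠ s. -/

import Mathlib

open Finset

/-- Generalized harmonic number `H_n^(r) = ∑_{k=1}^n 1/k^r`. -/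
noncomputable def Hgen (r n : ℕ) : ℝ := ∑ k ∈ Finset.Icc 1 n, (1 : ℝ) / (k : ℝ) ^ r

/-- Hyperharmonic numbers of non-negative order: `hpos 0 n = 1/n`,
`hpos (r+1) n = ∑_{k=1}^n hpos r k`.  In particular `hpos 1 n = H_n`. -/
noncomputable def hpos : ℕ → ℕ → ℝ
  | 0, n => 1 / (n : ℝ)
  | r + 1, n => ∑ k ∈ Finset.Icc 1 n, hpos r k

/-- Hyperharmonic numbers of negative order: `hneg r n = h_n^(-r)` for `r ≥ 1`. -/
noncomputable def hneg (r n : ℕ) : ℝ :=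
  if r < n then (-1 : ℝ) ^ r / (((n - r : ℕ) : ℝ) * (Nat.choose n r : ℝ))
  else ∑ k ∈ Finset.range n, (Nat.choose r k : ℝ) * (-1 : ℝ) ^ k / ((n - k : ℕ) : ℝ)

/-- Hyperharmonic numbers of arbitrary integer order. -/
noncomputable def hh (r : ℤ) (n : ℕ) : ℝ :=
  if 0 ≤ r then hpos r.toNat n else hneg (-r).toNat n

/-- Riemann zeta value `ζ(k) = ∑_{n=1}^∞ 1/n^k`. -/
noncomputable def zetaVal (k : ℕ) : ℝ := ∑' n : ℕ, 1 / ((n : ℝ) + 1) ^ k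

/-- Linear Euler sum `ζ_{H^(s)}(t) = ∑_{n=1}^∞ H_n^(s)/n^t`. -/
noncomputable def eulerSum (s t : ℕ) : ℝ := ∑' n : ℕ, Hgen s (n + 1) / ((n : ℝ) + 1) ^ t

/-- The set of Riemann zeta values `ζ(k)`, `k ≥ 2`. -/
def zetaSet : Set ℝ := {x | ∃ k : ℕ, 2 ≤ k ∧ x = zetaVal k}

/-- The set of Riemann zeta values together with linear Euler sums. -/
def zetaEulerSet : Set ℝ :=
  zetaSet ∪ {x | ∃ s t : ℕ, 1 ≤ s ∧ 2 ≤ t ∧ x = eulerSum s t}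

/-- `B₃(m,s)`. -/
noncomputable def B3 (m s : ℕ) : ℝ :=
  if m = s then zetaVal 3 - Hgen 3 m
  else zetaVal 2 / ((s : ℝ) - (m : ℝ)) + (Hgen 1 m - Hgen 1 s) / ((s : ℝ) - (m : ℝ)) ^ 2 -
    Hgen 2 m / ((s : ℝ) - (m : ℝ))

open Finset Filter Topology

lemma hasSum_congr' {F G : ℕ → ℝ} {A B : ℝ} (h : HasSum F A) (hfg : ∀ n, F n = G n)
    (hab : A = B) : HasSum G B := by
  rw [← hab, show G = F from funext fun n => (hfg n).symm]; exact h

lemma Hgen_eq_range (r a : ℕ) : Hgen r a = ∑ i ∈ Finset.range a, 1 / ((i:ℝ) + 1) ^ r := by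
  unfold Hgen
  rw [show Finset.Icc 1 a = Finset.Ico 1 (a+1) by rfl, Finset.sum_Ico_eq_sum_range]
  simp only [Nat.add_sub_cancel]
  refine Finset.sum_congr rfl fun i _ => ?_
  push_cast; ring_nf

lemma hasSum_zeta (k : ℕ) (hk : 2 ≤ k) :
    HasSum (fun n : ℕ => 1 / ((n:ℝ) + 1) ^ k) (zetaVal k) := by
  have hsum : Summable (fun n : ℕ => 1 / ((n:ℝ) + 1) ^ k) := by
    have h1 : Summable (fun n : ℕ => 1 / (n:ℝ) ^ k) := Real.summable_one_div_nat_pow.mpr hk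
    have := (summable_nat_add_iff (f := fun n : ℕ => 1 / (n:ℝ) ^ k) 1).mpr h1
    simpa [Nat.cast_add] using this
  exact hsum.hasSum

lemma hasSum_zeta_shift (k : ℕ) (hk : 2 ≤ k) (a : ℕ) :
    HasSum (fun n : ℕ => 1 / ((n:ℝ) + 1 + a) ^ k) (zetaVal k - Hgen k a) := by
  have h2 : HasSum (fun n : ℕ => 1 / (((n + a : ℕ) : ℝ) + 1) ^ k) (zetaVal k - Hgen k a) := by
    rw [hasSum_nat_add_iff (f := fun n : ℕ => 1 / ((n:ℝ) + 1) ^ k) a]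
    rw [Hgen_eq_range k a]
    simpa using hasSum_zeta k hk
  exact hasSum_congr' h2 (fun n => by push_cast; ring_nf) rfl

lemma hasSum_tel (k : ℕ) :
    HasSum (fun n : ℕ => 1 / ((n:ℝ) + 1 + k) - 1 / ((n:ℝ) + 2 + k)) (1 / ((k:ℝ) + 1)) := by
  have hnn : ∀ n : ℕ, (0:ℝ) ≤ 1 / ((n:ℝ) + 1 + k) - 1 / ((n:ℝ) + 2 + k) := by
    intro n
    have h1 : (0:ℝ) < (n:ℝ) + 1 + k := by positivity
    have : (1:ℝ) / ((n:ℝ) + 2 + k) ≤ 1 / ((n:ℝ) + 1 + k) := by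
      apply one_div_le_one_div_of_le h1; linarith
    linarith
  rw [hasSum_iff_tendsto_nat_of_nonneg hnn]
  have key : ∀ N : ℕ, ∑ i ∈ Finset.range N, (1 / ((i:ℝ) + 1 + k) - 1 / ((i:ℝ) + 2 + k))
      = 1 / ((k:ℝ) + 1) - 1 / ((N:ℝ) + 1 + k) := by
    intro N
    have h0 := Finset.sum_range_sub' (fun i : ℕ => 1 / ((i:ℝ) + 1 + k)) N
    calc ∑ i ∈ Finset.range N, (1 / ((i:ℝ) + 1 + k) - 1 / ((i:ℝ) + 2 + k))
        = ∑ i ∈ Finset.range N, (1 / ((i:ℝ) + 1 + k) - 1 / (((i+1:ℕ):ℝ) + 1 + k)) :=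
          Finset.sum_congr rfl fun i _ => by push_cast; ring_nf
      _ = 1 / (((0:ℕ):ℝ) + 1 + k) - 1 / ((N:ℝ) + 1 + k) := h0
      _ = 1 / ((k:ℝ) + 1) - 1 / ((N:ℝ) + 1 + k) := by norm_num; ring_nf
  simp only [key]
  have htend : Tendsto (fun N : ℕ => 1 / ((N:ℝ) + 1 + k)) atTop (𝓝 0) := by
    have h1 : Tendsto (fun N : ℕ => (N:ℝ) + 1 + k) atTop atTop :=
      tendsto_atTop_add_const_right _ _ (tendsto_atTop_add_const_right _ _
        tendsto_natCast_atTop_atTop)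
    simpa [one_div, Pi.inv_def] using h1.inv_tendsto_atTop
  simpa using (tendsto_const_nhds (x := 1 / ((k:ℝ) + 1)) (f := atTop (α := ℕ))).sub htend

lemma hasSum_D (a : ℕ) :
    HasSum (fun n : ℕ => 1 / ((n:ℝ) + 1) - 1 / ((n:ℝ) + 1 + a)) (Hgen 1 a) := by
  have h := hasSum_sum (s := Finset.range a)
    (f := fun (k : ℕ) (n : ℕ) => 1 / ((n:ℝ) + 1 + k) - 1 / ((n:ℝ) + 2 + k))
    (a := fun k : ℕ => 1 / ((k:ℝ) + 1)) (fun k _ => hasSum_tel k)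
  refine hasSum_congr' h (fun n => ?_) ?_
  · have h0 := Finset.sum_range_sub' (fun k : ℕ => 1 / ((n:ℝ) + 1 + k)) a
    calc ∑ k ∈ Finset.range a, (1 / ((n:ℝ) + 1 + k) - 1 / ((n:ℝ) + 2 + k))
        = ∑ k ∈ Finset.range a, (1 / ((n:ℝ) + 1 + k) - 1 / ((n:ℝ) + 1 + ((k+1:ℕ):ℝ))) :=
          Finset.sum_congr rfl fun k _ => by push_cast; ring_nf
      _ = 1 / ((n:ℝ) + 1 + ((0:ℕ):ℝ)) - 1 / ((n:ℝ) + 1 + a) := h0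
      _ = 1 / ((n:ℝ) + 1) - 1 / ((n:ℝ) + 1 + a) := by norm_num
  · rw [Hgen_eq_range 1 a]
    exact Finset.sum_congr rfl fun k _ => by push_cast; ring_nf
noncomputable def Vc (m r : ℕ) : ℝ :=
  ∑ j ∈ Finset.range r, (-1:ℝ)^j * zetaVal (r+1-j) / (m:ℝ)^(j+1)
    + (-1:ℝ)^r * Hgen 1 m / (m:ℝ)^(r+1)

noncomputable def Fc (m v : ℕ) : ℝ :=
  zetaVal 2 - Hgen 2 m - ((v:ℝ)+1) * Hgen 1 m / (m:ℝ)
    + ∑ n ∈ Finset.range v, (-(m:ℝ))^n * ((v-n:ℕ):ℝ) * zetaVal (n+2)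

lemma hasSum_H (a : ℕ) (ha : 1 ≤ a) :
    HasSum (fun n : ℕ => 1 / (((n:ℝ)+1) * ((n:ℝ)+1+a))) (Hgen 1 a / a) := by
  have ha' : ((a:ℝ)) ≠ 0 := by positivity
  refine hasSum_congr' ((hasSum_D a).div_const a) (fun n => ?_) rfl
  have hx : ((n:ℝ)+1) ≠ 0 := by positivity
  have hxa : ((n:ℝ)+1+a) ≠ 0 := by positivity
  field_simp
  ring

lemma hasSum_V (m : ℕ) (hm : 1 ≤ m) (r : ℕ) :
    HasSum (fun n : ℕ => 1 / (((n:ℝ)+1)^(r+1) * ((n:ℝ)+1+m))) (Vc m r) := by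
  have hm' : ((m:ℝ)) ≠ 0 := by positivity
  induction r with
  | zero =>
    refine hasSum_congr' (hasSum_H m hm) (fun n => by rw [pow_one]) ?_
    simp [Vc]
  | succ r ih =>
    have hz := hasSum_zeta (r+2) (by omega)
    refine hasSum_congr' ((hz.div_const m).sub (ih.div_const m)) (fun n => ?_) ?_
    · have hx : ((n:ℝ)+1) ≠ 0 := by positivity
      have hxm : ((n:ℝ)+1+m) ≠ 0 := by positivity
      field_simp
      ring
    · rw [Vc, Vc, Finset.sum_range_succ']
      rw [Finset.sum_congr rfl (fun j (hj : j ∈ Finset.range r) =>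
        show (-1:ℝ)^(j+1) * zetaVal (r+1+1-(j+1)) / (m:ℝ)^(j+1+1)
            = -(((-1:ℝ)^j * zetaVal (r+1-j) / (m:ℝ)^(j+1)) / m) by
          rw [show r+1+1-(j+1) = r+1-j from by omega]
          rw [pow_succ (-1:ℝ), pow_succ (m:ℝ)]
          field_simp)]
      rw [Finset.sum_neg_distrib, ← Finset.sum_div]
      simp only [Nat.sub_zero, pow_zero, one_mul, zero_add, pow_one]
      field_simp
      ring
lemma I2 (m : ℕ) (hm : 1 ≤ m) (q : ℕ) :
    (-1:ℝ)^q * (m:ℝ)^(q+1) * Vc m (q+1)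
      = ∑ n ∈ Finset.range (q+1), (-(m:ℝ))^n * zetaVal (n+2) - Hgen 1 m / m := by
  have hm' : ((m:ℝ)) ≠ 0 := by positivity
  rw [Vc, mul_add, Finset.mul_sum, sub_eq_add_neg]
  congr 1
  · rw [← Finset.sum_range_reflect (fun n => (-(m:ℝ))^n * zetaVal (n+2)) (q+1)]
    refine Finset.sum_congr rfl fun j hj => ?_
    rw [Finset.mem_range] at hj
    obtain ⟨k, rfl⟩ : ∃ k, q = j + k := ⟨q - j, by omega⟩
    rw [show j+k+1+1-j = k+2 from by omega, show j+k+1-1-j = k from by omega]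
    have hx : ((-1:ℝ))^j * (-1:ℝ)^j = 1 := by rw [← mul_pow]; norm_num
    rw [pow_add (-1:ℝ) j k, show j+k+1 = j+(k+1) from by omega, pow_add (m:ℝ) j (k+1),
      pow_succ (m:ℝ) k, neg_pow (m:ℝ) k]
    field_simp
    linear_combination (m:ℝ) * (m:ℝ)^j * zetaVal (k+2) * hx
  · have hx : ((-1:ℝ))^q * (-1:ℝ)^(q+1) = -1 := by
      rw [← pow_add]
      exact Odd.neg_one_pow ⟨q, by ring⟩
    rw [show q+1+1 = (q+1)+1 from rfl, pow_succ (m:ℝ) (q+1)]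
    have h2 : ((-1:ℝ))^(q*2) = 1 := by rw [show q*2 = 2*q from by ring, pow_mul]; norm_num
    field_simp
    linear_combination (Hgen 1 m * (m:ℝ)^(q+1)) * hx
      + (((m:ℝ)*(m:ℝ)^q - 1) * Hgen 1 m) * h2

lemma I1 (m : ℕ) (hm : 1 ≤ m) (q : ℕ) :
    Fc m (q+1) - Fc m q
      = ∑ n ∈ Finset.range (q+1), (-(m:ℝ))^n * zetaVal (n+2) - Hgen 1 m / m := by
  rw [Fc, Fc]
  have hA : ∑ n ∈ Finset.range q, (-(m:ℝ))^n * ((q-n:ℕ):ℝ) * zetaVal (n+2)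
      = ∑ n ∈ Finset.range (q+1), (-(m:ℝ))^n * ((q-n:ℕ):ℝ) * zetaVal (n+2) := by
    rw [Finset.sum_range_succ, Nat.sub_self]
    simp
  rw [hA]
  have hS : ∑ n ∈ Finset.range (q+1), (-(m:ℝ))^n * zetaVal (n+2)
      = ∑ n ∈ Finset.range (q+1), ((-(m:ℝ))^n * ((q+1-n:ℕ):ℝ) * zetaVal (n+2)
          - (-(m:ℝ))^n * ((q-n:ℕ):ℝ) * zetaVal (n+2)) := by
    refine Finset.sum_congr rfl fun n hn => ?_
    rw [Finset.mem_range] at hn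
    have h1 : ((q+1-n:ℕ):ℝ) = (q:ℝ)+1-(n:ℝ) := by
      have : n ≤ q+1 := by omega
      push_cast [Nat.cast_sub this]; ring
    have h2 : ((q-n:ℕ):ℝ) = (q:ℝ)-(n:ℝ) := by
      have : n ≤ q := by omega
      push_cast [Nat.cast_sub this]; ring
    rw [h1, h2]; ring
  rw [hS, Finset.sum_sub_distrib]
  push_cast
  ring

lemma hasSum_T (m : ℕ) (hm : 1 ≤ m) (q : ℕ) :
    HasSum (fun n : ℕ => 1 / (((n:ℝ)+1)^(q+1) * ((n:ℝ)+1+m)^2))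
      ((-1:ℝ)^(q+1) / (m:ℝ)^(q+1) * Fc m q) := by
  have hm' : ((m:ℝ)) ≠ 0 := by positivity
  induction q with
  | zero =>
    refine hasSum_congr' (((hasSum_H m hm).div_const m).sub
      ((hasSum_zeta_shift 2 le_rfl m).div_const m)) (fun n => ?_) ?_
    · have hx : ((n:ℝ)+1) ≠ 0 := by positivity
      have hxm : ((n:ℝ)+1+m) ≠ 0 := by positivity
      field_simp
      ring
    · rw [Fc]
      simp only [Finset.range_zero, Finset.sum_empty, Nat.cast_zero]
      field_simp
      ring
  | succ q ih =>
    refine hasSum_congr' (((hasSum_V m hm (q+1)).div_const m).sub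
      (ih.div_const m)) (fun n => ?_) ?_
    · have hx : ((n:ℝ)+1) ≠ 0 := by positivity
      have hxm : ((n:ℝ)+1+m) ≠ 0 := by positivity
      field_simp
      ring
    · have hF : Fc m (q+1) = Fc m q + (-1:ℝ)^q * (m:ℝ)^(q+1) * Vc m (q+1) := by
        have h1 := I1 m hm q
        have h2 := I2 m hm q
        linarith
      rw [hF]
      have hx : ((-1:ℝ))^q * (-1:ℝ)^q = 1 := by rw [← mul_pow]; norm_num
      rw [show q+1+1 = (q+1)+1 from rfl, pow_succ (m:ℝ) (q+1), pow_succ (-1:ℝ) (q+1),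
        pow_succ (m:ℝ) q, pow_succ (-1:ℝ) q]
      have h2 : ((-1:ℝ))^(q*2) = 1 := by rw [show q*2 = 2*q from by ring, pow_mul]; norm_num
      field_simp
      ring_nf
      linear_combination (-(Vc m (1+q) * (m:ℝ) * (m:ℝ)^q)) * h2
lemma hasSum_S0 (m s : ℕ) (hm : 1 ≤ m) (hs : 1 ≤ s) :
    HasSum (fun n : ℕ => 1 / (((n:ℝ)+1+m)^2 * ((n:ℝ)+1+s))) (B3 m s) := by
  by_cases hms : m = s
  · subst hms
    refine hasSum_congr' (hasSum_zeta_shift 3 (by norm_num) m) (fun n => ?_) ?_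
    · ring
    · rw [B3, if_pos rfl]
  · have hd : ((s:ℝ)) - (m:ℝ) ≠ 0 := by
      intro h
      exact hms (by exact_mod_cast (sub_eq_zero.mp h).symm)
    have hD : HasSum (fun n : ℕ => 1 / ((n:ℝ)+1+m) - 1 / ((n:ℝ)+1+s))
        (Hgen 1 s - Hgen 1 m) :=
      hasSum_congr' ((hasSum_D s).sub (hasSum_D m)) (fun n => by ring) rfl
    refine hasSum_congr' (((hasSum_zeta_shift 2 le_rfl m).div_const ((s:ℝ)-(m:ℝ))).sub
      (hD.div_const (((s:ℝ)-(m:ℝ))^2))) (fun n => ?_) ?_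
    · have hxm : ((n:ℝ)+1+m) ≠ 0 := by positivity
      have hxs : ((n:ℝ)+1+s) ≠ 0 := by positivity
      field_simp
      ring
    · rw [B3, if_neg hms]
      field_simp
      ring

lemma hasSum_S (m s : ℕ) (hm : 1 ≤ m) (hs : 1 ≤ s) (q : ℕ) :
    HasSum (fun n : ℕ => 1 / (((n:ℝ)+1)^q * ((n:ℝ)+1+m)^2 * ((n:ℝ)+1+s)))
      (∑ v ∈ Finset.range q, (-1:ℝ)^q / ((s:ℝ)^(q-v) * (m:ℝ)^(v+1)) * Fc m v
        + (-1:ℝ)^q / (s:ℝ)^q * B3 m s) := by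
  have hm' : ((m:ℝ)) ≠ 0 := by positivity
  have hs' : ((s:ℝ)) ≠ 0 := by positivity
  induction q with
  | zero =>
    refine hasSum_congr' (hasSum_S0 m s hm hs) (fun n => by norm_num) (by norm_num)
  | succ q ih =>
    refine hasSum_congr' (((hasSum_T m hm q).div_const s).sub (ih.div_const s))
      (fun n => ?_) ?_
    · have hx : ((n:ℝ)+1) ≠ 0 := by positivity
      have hxm : ((n:ℝ)+1+m) ≠ 0 := by positivity
      have hxs : ((n:ℝ)+1+s) ≠ 0 := by positivity
      field_simp
      ring
    · rw [Finset.sum_range_succ, show q+1-q = 1 from by omega]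
      rw [Finset.sum_congr rfl (fun v (hv : v ∈ Finset.range q) =>
        show (-1:ℝ)^(q+1) / ((s:ℝ)^(q+1-v) * (m:ℝ)^(v+1)) * Fc m v
            = -(((-1:ℝ)^q / ((s:ℝ)^(q-v) * (m:ℝ)^(v+1)) * Fc m v) / s) from by
          have hv' := Finset.mem_range.mp hv
          rw [show q+1-v = (q-v)+1 from by omega, pow_succ (s:ℝ), pow_succ (-1:ℝ)]
          ring)]
      rw [Finset.sum_neg_distrib, ← Finset.sum_div]
      rw [pow_succ (s:ℝ) q, pow_succ (-1:ℝ) q, pow_one]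
      field_simp
      ring
theorem stmt18 (p m s : ℕ) (hp : 1 ≤ p) (hm : 1 ≤ m) (hs : 1 ≤ s) :
    ∑' n : ℕ, 1 / (((n + 1 : ℕ) : ℝ) ^ p * ((n + 1 + m : ℕ) : ℝ) ^ 2 *
        ((n + 1 + s : ℕ) : ℝ)) =
      (∑ v ∈ Finset.range p, (-1 : ℝ) ^ p / ((s : ℝ) ^ (p - v) * (m : ℝ) ^ (v + 1)) *
        (zetaVal 2 - Hgen 2 m - ((v : ℝ) + 1) * Hgen 1 m / (m : ℝ) +
         ∑ n ∈ Finset.range v, (-(m : ℝ)) ^ n * ((v - n : ℕ) : ℝ) * zetaVal (n + 2))) +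
      (-1 : ℝ) ^ p / (s : ℝ) ^ p * B3 m s := by
  have h := (hasSum_S m s hm hs p).tsum_eq
  have key : (∑' n : ℕ, 1 / (((n + 1 : ℕ) : ℝ) ^ p * ((n + 1 + m : ℕ) : ℝ) ^ 2 *
        ((n + 1 + s : ℕ) : ℝ)))
      = ∑' n : ℕ, 1 / (((n:ℝ)+1)^p * ((n:ℝ)+1+m)^2 * ((n:ℝ)+1+s)) :=
    tsum_congr fun n => by push_cast; ring_nf
  rw [key, h]; simp only [Fc]
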